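/- Let n be a positive integer and let y = (y_1, …, y_n) ∈ ℝ^n satisfy y_i ≥ 0 for all i and ∑ y_i² ≤ n. Then there exists x = (x_1, …, x_n) ∈ ℝ^n with ∑ x_i² ≤ n and ∑ 2^{y_i} ≤ ∑ 2^{x_i}, such that after a permutation of coordinates x has one of the following forms: (i) x = (a, a, …, a) with 0 ≤ a ≤ 1; (ii) x = (a, …, a, b) with 0 < a < 1 < b and 2^a/a = 2^b/b; (iii) x = (a, b, …, b) with 0 < a < 1 < b and 2^a/a = 2^b/b. -/

import Mathlib

open Real Finset Function Set

namespace Stmt8Aux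

lemma l_pos : 0 < Real.log 2 := Real.log_pos (by norm_num)

lemma l_lt_one : Real.log 2 < 1 := by
  have := Real.log_two_lt_d9
  linarith

lemma one_lt_t0 : 1 < 1 / Real.log 2 := by
  rw [lt_div_iff₀ l_pos]; simpa using l_lt_one

lemma two_rpow_pos (x : ℝ) : 0 < (2:ℝ) ^ x := Real.rpow_pos_of_pos (by norm_num) x

lemma two_rpow_ge (e : ℝ) : 1 + Real.log 2 * e ≤ (2:ℝ) ^ e := by
  rw [Real.rpow_def_of_pos (by norm_num) e]
  have := Real.add_one_le_exp (Real.log 2 * e)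
  linarith

lemma hasDerivAt_two_rpow (x : ℝ) :
    HasDerivAt (fun t : ℝ => (2:ℝ) ^ t) ((2:ℝ) ^ x * Real.log 2) x :=
  (Real.hasStrictDerivAt_const_rpow (by norm_num) x).hasDerivAt

lemma continuous_two_rpow : Continuous (fun t : ℝ => (2:ℝ) ^ t) := by
  have : (fun t : ℝ => (2:ℝ) ^ t) = fun t => Real.exp (Real.log 2 * t) := by
    funext t; exact Real.rpow_def_of_pos (by norm_num) t
  rw [this]
  exact Real.continuous_exp.comp (continuous_const.mul continuous_id)

/-! ### Monotonicity of `φ(t) = 2^t / t` -/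

lemma hasDerivAt_phi {t : ℝ} (ht : t ≠ 0) :
    HasDerivAt (fun t : ℝ => (2:ℝ) ^ t / t)
      (((2:ℝ) ^ t * Real.log 2 * t - (2:ℝ) ^ t * 1) / t ^ 2) t :=
  (hasDerivAt_two_rpow t).div (hasDerivAt_id t) ht

lemma phi_contOn {s : Set ℝ} (hs : ∀ t ∈ s, t ≠ 0) :
    ContinuousOn (fun t : ℝ => (2:ℝ) ^ t / t) s :=
  ContinuousOn.div continuous_two_rpow.continuousOn continuousOn_id hs

lemma phi_strictMonoOn :
    StrictMonoOn (fun t : ℝ => (2:ℝ) ^ t / t) (Set.Ici (1 / Real.log 2)) := by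
  have h0 : (0:ℝ) < 1 / Real.log 2 := by positivity
  apply strictMonoOn_of_deriv_pos (convex_Ici _)
    (phi_contOn (fun t ht => by have : 1 / Real.log 2 ≤ t := ht; linarith))
  intro t ht
  rw [interior_Ici] at ht
  have ht' : 1 / Real.log 2 < t := ht
  have htpos : 0 < t := lt_trans h0 ht'
  rw [(hasDerivAt_phi htpos.ne').deriv]
  have hnum : 0 < (2:ℝ) ^ t * Real.log 2 * t - (2:ℝ) ^ t * 1 := by
    have h1 : 1 < Real.log 2 * t := by
      rw [div_lt_iff₀ l_pos] at ht'
      linarith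
    have := two_rpow_pos t
    nlinarith
  positivity

lemma phi_strictAntiOn :
    StrictAntiOn (fun t : ℝ => (2:ℝ) ^ t / t) (Set.Ioc 0 (1 / Real.log 2)) := by
  apply strictAntiOn_of_deriv_neg (convex_Ioc _ _)
    (phi_contOn (fun t ht => ht.1.ne'))
  intro t ht
  rw [interior_Ioc] at ht
  obtain ⟨ht0, ht1⟩ := ht
  rw [(hasDerivAt_phi ht0.ne').deriv]
  have hnum : (2:ℝ) ^ t * Real.log 2 * t - (2:ℝ) ^ t * 1 < 0 := by
    have h1 : Real.log 2 * t < 1 := by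
      rw [lt_div_iff₀ l_pos] at ht1
      linarith
    have := two_rpow_pos t
    nlinarith
  have hd : (0:ℝ) < t ^ 2 := by positivity
  exact div_neg_of_neg_of_pos hnum hd

/-! ### Strict convexity of `s ↦ 2^√s` -/

lemma hasDerivAt_u {s : ℝ} (hs : 0 < s) :
    HasDerivAt (fun s : ℝ => (2:ℝ) ^ Real.sqrt s)
      ((2:ℝ) ^ Real.sqrt s * Real.log 2 * (1 / (2 * Real.sqrt s))) s :=
  (hasDerivAt_two_rpow (Real.sqrt s)).comp s (Real.hasDerivAt_sqrt hs.ne')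

lemma hasDerivAt_u1 {s : ℝ} (hs : 0 < s) :
    HasDerivAt (fun s : ℝ => (2:ℝ) ^ Real.sqrt s * Real.log 2 * (1 / (2 * Real.sqrt s)))
      (((2:ℝ) ^ Real.sqrt s * Real.log 2 * (1 / (2 * Real.sqrt s)) * Real.log 2 * (2 * Real.sqrt s)
        - (2:ℝ) ^ Real.sqrt s * Real.log 2 * (2 * (1 / (2 * Real.sqrt s))))
        / (2 * Real.sqrt s) ^ 2) s := by
  have hsq : Real.sqrt s ≠ 0 := (Real.sqrt_pos.2 hs).ne'
  have hN : HasDerivAt (fun s : ℝ => (2:ℝ) ^ Real.sqrt s * Real.log 2)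
      ((2:ℝ) ^ Real.sqrt s * Real.log 2 * (1 / (2 * Real.sqrt s)) * Real.log 2) s :=
    (hasDerivAt_u hs).mul_const _
  have hD : HasDerivAt (fun s : ℝ => 2 * Real.sqrt s) (2 * (1 / (2 * Real.sqrt s))) s :=
    (Real.hasDerivAt_sqrt hs.ne').const_mul 2
  have hDne : 2 * Real.sqrt s ≠ 0 := by positivity
  have := hN.div hD hDne
  have hf : (fun s : ℝ => (2:ℝ) ^ Real.sqrt s * Real.log 2 * (1 / (2 * Real.sqrt s)))
      = ((fun s : ℝ => (2:ℝ) ^ Real.sqrt s * Real.log 2) / fun s : ℝ => 2 * Real.sqrt s) := by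
    funext t; simp only [Pi.div_apply]; ring
  rw [hf]; exact this

lemma u_strictConvexOn {c : ℝ} (hc : (1 / Real.log 2) ^ 2 < c) :
    StrictConvexOn ℝ (Set.Ici c) (fun s : ℝ => (2:ℝ) ^ Real.sqrt s) := by
  have hc0 : 0 < c := lt_trans (by positivity) hc
  have hcont : Continuous (fun s : ℝ => (2:ℝ) ^ Real.sqrt s) :=
    continuous_two_rpow.comp Real.continuous_sqrt
  apply strictConvexOn_of_deriv2_pos (convex_Ici c) hcont.continuousOn
  intro s hs
  rw [interior_Ici] at hs
  have hs0 : 0 < s := lt_trans hc0 hs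
  have hev : ∀ᶠ t in nhds s, deriv (fun s : ℝ => (2:ℝ) ^ Real.sqrt s) t
      = (fun t : ℝ => (2:ℝ) ^ Real.sqrt t * Real.log 2 * (1 / (2 * Real.sqrt t))) t := by
    filter_upwards [eventually_gt_nhds hs0] with t ht
    exact (hasDerivAt_u ht).deriv
  have h2 : deriv^[2] (fun s : ℝ => (2:ℝ) ^ Real.sqrt s) s
      = deriv (fun t : ℝ => (2:ℝ) ^ Real.sqrt t * Real.log 2 * (1 / (2 * Real.sqrt t))) s := by
    simp only [Function.iterate_succ, Function.iterate_zero, Function.id_comp,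
      Function.comp_apply]
    exact Filter.EventuallyEq.deriv_eq hev
  rw [h2, (hasDerivAt_u1 hs0).deriv]
  have hsVs : 1 / Real.log 2 < Real.sqrt s := by
    have : Real.sqrt ((1 / Real.log 2) ^ 2) < Real.sqrt s :=
      Real.sqrt_lt_sqrt (by positivity) (lt_trans hc hs)
    rwa [Real.sqrt_sq (by positivity)] at this
  have hq : 0 < Real.sqrt s := Real.sqrt_pos.2 hs0
  have hkey : 1 / Real.sqrt s < Real.log 2 := by
    rw [div_lt_iff₀ hq]
    rw [div_lt_iff₀ l_pos] at hsVs
    linarith [mul_comm (Real.log 2) (Real.sqrt s)]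
  have h2p := two_rpow_pos (Real.sqrt s)
  have hnum : 0 < (2:ℝ) ^ Real.sqrt s * Real.log 2 * (1 / (2 * Real.sqrt s)) * Real.log 2
        * (2 * Real.sqrt s) - (2:ℝ) ^ Real.sqrt s * Real.log 2 * (2 * (1 / (2 * Real.sqrt s))) := by
    have e1 : (2:ℝ) ^ Real.sqrt s * Real.log 2 * (1 / (2 * Real.sqrt s)) * Real.log 2
        * (2 * Real.sqrt s) = (2:ℝ) ^ Real.sqrt s * Real.log 2 * Real.log 2 := by
      field_simp
    have e2 : (2:ℝ) ^ Real.sqrt s * Real.log 2 * (2 * (1 / (2 * Real.sqrt s)))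
        = (2:ℝ) ^ Real.sqrt s * Real.log 2 * (1 / Real.sqrt s) := by
      field_simp
    rw [e1, e2]
    have : 0 < (2:ℝ) ^ Real.sqrt s * Real.log 2 := by positivity
    nlinarith
  positivity

/-! ### Sum manipulation -/

lemma sum_update_f {n : ℕ} (f : ℝ → ℝ) (x : Fin n → ℝ) (i : Fin n) (A : ℝ) :
    ∑ k, f (Function.update x i A k)
      = f A + ∑ k ∈ Finset.univ \ {i}, f (x k) := by
  classical
  have key : ∀ k, f (Function.update x i A k)
      = Function.update (fun k => f (x k)) i (f A) k := by
    intro k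
    simp only [Function.update_apply, apply_ite f]
  rw [Finset.sum_congr rfl (fun k _ => key k), Finset.sum_update_of_mem (Finset.mem_univ i)]

lemma sum_split_one {n : ℕ} (f : ℝ → ℝ) (x : Fin n → ℝ) (i : Fin n) :
    ∑ k, f (x k) = f (x i) + ∑ k ∈ Finset.univ \ {i}, f (x k) := by
  have := sum_update_f f x i (x i)
  rwa [Function.update_eq_self] at this

lemma sum_two_update {n : ℕ} (f : ℝ → ℝ) (x : Fin n → ℝ) {i j : Fin n} (hij : i ≠ j)
    (A B : ℝ) :
    ∑ k, f (Function.update (Function.update x i A) j B k)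
      = f A + f B + ∑ k ∈ (Finset.univ \ {j}) \ {i}, f (x k) := by
  classical
  rw [sum_update_f f _ j B]
  have hi : i ∈ Finset.univ \ ({j} : Finset (Fin n)) := by simp [hij]
  have key : ∀ k ∈ Finset.univ \ ({j} : Finset (Fin n)),
      f (Function.update x i A k) = Function.update (fun k => f (x k)) i (f A) k :=
    fun k _ => by simp only [Function.update_apply, apply_ite f]
  rw [Finset.sum_congr rfl key, Finset.sum_update_of_mem hi]
  ring

lemma sum_split_two {n : ℕ} (f : ℝ → ℝ) (x : Fin n → ℝ) {i j : Fin n} (hij : i ≠ j) :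
    ∑ k, f (x k) = f (x i) + f (x j) + ∑ k ∈ (Finset.univ \ {j}) \ {i}, f (x k) := by
  have h := sum_two_update f x hij (x i) (x j)
  rw [Function.update_eq_self, Function.update_eq_self] at h
  exact h

/-! ### Existence of a maximizer -/

lemma exists_max (n : ℕ) (y : Fin n → ℝ) (hy0 : ∀ i, 0 ≤ y i)
    (hy : ∑ i, (y i) ^ 2 ≤ (n : ℝ)) :
    ∃ x : Fin n → ℝ, (∀ i, 0 ≤ x i) ∧ (∑ i, (x i) ^ 2 ≤ (n : ℝ)) ∧
      ∀ z : Fin n → ℝ, (∀ i, 0 ≤ z i) → (∑ i, (z i) ^ 2 ≤ (n : ℝ)) →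
        ∑ i, (2:ℝ) ^ (z i) ≤ ∑ i, (2:ℝ) ^ (x i) := by
  set K : Set (Fin n → ℝ) := {x | (∀ i, 0 ≤ x i) ∧ ∑ i, (x i) ^ 2 ≤ (n : ℝ)} with hK
  have hclosed : IsClosed K := by
    have h1 : IsClosed {x : Fin n → ℝ | ∀ i, 0 ≤ x i} := by
      have : {x : Fin n → ℝ | ∀ i, 0 ≤ x i} = ⋂ i, {x | 0 ≤ x i} := by
        ext x; simp
      rw [this]
      exact isClosed_iInter fun i => isClosed_le continuous_const (continuous_apply i)
    have h2 : IsClosed {x : Fin n → ℝ | ∑ i, (x i) ^ 2 ≤ (n : ℝ)} :=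
      isClosed_le (continuous_finset_sum _ fun i _ => (continuous_apply i).pow 2)
        continuous_const
    exact h1.inter h2
  have hsub : K ⊆ Set.Icc (fun _ => (0:ℝ)) (fun _ => Real.sqrt n) := by
    rintro x ⟨hx0, hxs⟩
    constructor
    · intro i; exact hx0 i
    · intro i
      have h1 : (x i) ^ 2 ≤ (n : ℝ) := by
        refine le_trans ?_ hxs
        exact Finset.single_le_sum (fun k _ => sq_nonneg (x k)) (Finset.mem_univ i)
      calc x i = Real.sqrt ((x i) ^ 2) := (Real.sqrt_sq (hx0 i)).symm
        _ ≤ Real.sqrt n := Real.sqrt_le_sqrt h1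
  have hcomp : IsCompact K := IsCompact.of_isClosed_subset isCompact_Icc hclosed hsub
  have hne : K.Nonempty := ⟨y, hy0, hy⟩
  have hcont : ContinuousOn (fun x : Fin n → ℝ => ∑ i, (2:ℝ) ^ (x i)) K := by
    apply Continuous.continuousOn
    exact continuous_finset_sum _ fun i _ => continuous_two_rpow.comp (continuous_apply i)
  obtain ⟨x, hxK, hmax⟩ := hcomp.exists_isMaxOn hne hcont
  exact ⟨x, hxK.1, hxK.2, fun z hz0 hzs => isMaxOn_iff.mp hmax z ⟨hz0, hzs⟩⟩

/-! ### Properties of the maximizer -/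

lemma key_ineq {P L e tt w : ℝ} (hP : 0 < P) (hL : 0 < L) (he : 0 < e) (htt : 0 < tt)
    (h4 : (tt - w) * tt ≤ e ^ 2) (h5 : e * (2 * P) ≤ tt) :
    P * (L * (tt - w)) < L * e := by
  have h6 : P * (L * (tt - w)) * tt ≤ P * L * e ^ 2 := by
    nlinarith [mul_le_mul_of_nonneg_left h4 (mul_pos hP hL).le]
  have h7 : P * L * e ^ 2 ≤ L * e * (tt / 2) := by
    nlinarith [mul_le_mul_of_nonneg_left h5 (mul_pos hL he).le]
  have h8 : L * e * (tt / 2) < L * e * tt := by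
    nlinarith [mul_pos hL he]
  exact lt_of_mul_lt_mul_right (by linarith) htt.le

section Max
variable {n : ℕ} {x : Fin n → ℝ}
  (hx0 : ∀ i, 0 ≤ x i) (hxs : ∑ i, (x i) ^ 2 ≤ (n : ℝ))
  (hmax : ∀ z : Fin n → ℝ, (∀ i, 0 ≤ z i) → (∑ i, (z i) ^ 2 ≤ (n : ℝ)) →
        ∑ i, (2:ℝ) ^ (z i) ≤ ∑ i, (2:ℝ) ^ (x i))

include hx0 hxs hmax

lemma sum_eq (hn : 0 < n) : ∑ i, (x i) ^ 2 = (n : ℝ) := by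
  by_contra h
  have hlt : ∑ i, (x i) ^ 2 < (n : ℝ) := lt_of_le_of_ne hxs h
  set S := ∑ i, (x i) ^ 2 with hS
  set i₀ : Fin n := ⟨0, hn⟩
  set p := x i₀ with hp
  have hp0 : 0 ≤ p := hx0 i₀
  set δ : ℝ := min 1 (((n : ℝ) - S) / (2 * p + 1)) with hδ
  have hδ0 : 0 < δ := by
    apply lt_min one_pos
    apply div_pos (by linarith) (by linarith)
  have hδ1 : δ ≤ 1 := min_le_left _ _
  have hδ2 : δ ≤ ((n : ℝ) - S) / (2 * p + 1) := min_le_right _ _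
  set z := Function.update x i₀ (p + δ) with hz
  have hz0 : ∀ i, 0 ≤ z i := by
    intro i
    rw [hz, Function.update_apply]
    split
    · linarith
    · exact hx0 i
  have hzs : ∑ i, (z i) ^ 2 ≤ (n : ℝ) := by
    have h1 : ∑ i, (z i) ^ 2 = (p + δ) ^ 2 + ∑ k ∈ Finset.univ \ {i₀}, (x k) ^ 2 :=
      sum_update_f (fun t => t ^ 2) x i₀ (p + δ)
    have h2 : S = p ^ 2 + ∑ k ∈ Finset.univ \ {i₀}, (x k) ^ 2 :=
      sum_split_one (fun t => t ^ 2) x i₀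
    have h3 : δ * (2 * p + 1) ≤ (n : ℝ) - S := by
      rw [← le_div_iff₀ (by linarith : (0:ℝ) < 2 * p + 1)]
      exact hδ2
    nlinarith [sq_nonneg δ]
  have hgz : ∑ i, (2:ℝ) ^ (x i) < ∑ i, (2:ℝ) ^ (z i) := by
    have h1 : ∑ i, (2:ℝ) ^ (z i) = (2:ℝ) ^ (p + δ) + ∑ k ∈ Finset.univ \ {i₀}, (2:ℝ) ^ (x k) :=
      sum_update_f (fun t => (2:ℝ) ^ t) x i₀ (p + δ)
    have h2 : ∑ i, (2:ℝ) ^ (x i) = (2:ℝ) ^ p + ∑ k ∈ Finset.univ \ {i₀}, (2:ℝ) ^ (x k) :=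
      sum_split_one (fun t => (2:ℝ) ^ t) x i₀
    have h3 : (2:ℝ) ^ p < (2:ℝ) ^ (p + δ) :=
      Real.rpow_lt_rpow_left_iff (by norm_num : (1:ℝ) < 2) |>.mpr (by linarith)
    rw [h1, h2]
    linarith
  exact absurd (hmax z hz0 hzs) (not_le.mpr hgz)

lemma all_pos (hn : 0 < n) : ∀ i, 0 < x i := by
  have hsum := sum_eq hx0 hxs hmax hn
  intro i
  rcases (hx0 i).lt_or_eq with h | h
  · exact h
  have hxi : x i = 0 := h.symm
  exfalso
  have hex : ∃ j, x j ≠ 0 := by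
    by_contra hall
    push_neg at hall
    have : ∑ k, (x k) ^ 2 = 0 := by
      apply Finset.sum_eq_zero; intro k _; rw [hall k]; ring
    rw [hsum] at this
    exact (Nat.cast_pos.mpr hn).ne' this
  obtain ⟨j, hj⟩ := hex
  have hij : i ≠ j := fun h => hj (h ▸ hxi)
  have ht : 0 < x j := lt_of_le_of_ne (hx0 j) (Ne.symm hj)
  set t := x j with htdef
  set ε : ℝ := min (t / 2) (t / (2 * (2:ℝ) ^ t)) with hε
  have h2t := two_rpow_pos t
  have hε0 : 0 < ε := lt_min (by linarith) (by positivity)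
  have hεt : ε ≤ t / 2 := min_le_left _ _
  have hε2 : ε ≤ t / (2 * (2:ℝ) ^ t) := min_le_right _ _
  have hε2' : ε * (2 * (2:ℝ) ^ t) ≤ t := by
    rw [← le_div_iff₀ (by positivity)]
    exact hε2
  have hεlt : ε ≤ t := by linarith
  have ht2ε : 0 ≤ t ^ 2 - ε ^ 2 := by nlinarith
  set w := Real.sqrt (t ^ 2 - ε ^ 2) with hw
  have hw0 : 0 ≤ w := Real.sqrt_nonneg _
  have hw2 : w ^ 2 = t ^ 2 - ε ^ 2 := Real.sq_sqrt ht2ε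
  have hwt : w ≤ t := by nlinarith
  set z := Function.update (Function.update x i ε) j w with hz
  have hz0 : ∀ k, 0 ≤ z k := by
    intro k
    rw [hz, Function.update_apply, Function.update_apply]
    split
    · exact hw0
    split
    · exact hε0.le
    · exact hx0 k
  have hzsq : ∑ k, (z k) ^ 2 = ∑ k, (x k) ^ 2 := by
    rw [hz, sum_two_update (fun s => s ^ 2) x hij ε w,
      sum_split_two (fun s => s ^ 2) x hij]
    rw [hxi]
    linarith [hw2]
  have hzs : ∑ k, (z k) ^ 2 ≤ (n : ℝ) := by rw [hzsq, hsum]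
  have hgz : ∑ k, (2:ℝ) ^ (x k) < ∑ k, (2:ℝ) ^ (z k) := by
    rw [hz, sum_two_update (fun s => (2:ℝ) ^ s) x hij ε w,
      sum_split_two (fun s => (2:ℝ) ^ s) x hij, hxi]
    have e0 : (2:ℝ) ^ (0:ℝ) = 1 := Real.rpow_zero 2
    rw [e0]
    have h1 : 1 + Real.log 2 * ε ≤ (2:ℝ) ^ ε := two_rpow_ge ε
    have h2 : (2:ℝ) ^ t - (2:ℝ) ^ w ≤ (2:ℝ) ^ t * (Real.log 2 * (t - w)) := by
      have e1 : (2:ℝ) ^ w = (2:ℝ) ^ t * (2:ℝ) ^ (w - t) := by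
        rw [← Real.rpow_add (by norm_num)]
        ring_nf
      have h3 : 1 + Real.log 2 * (w - t) ≤ (2:ℝ) ^ (w - t) := two_rpow_ge (w - t)
      rw [e1]
      nlinarith
    have h4 : (t - w) * t ≤ ε ^ 2 := by nlinarith
    have h5 : (2:ℝ) ^ t * (Real.log 2 * (t - w)) < Real.log 2 * ε :=
      key_ineq h2t l_pos hε0 ht h4 hε2'
    linarith
  exact absurd (hmax z hz0 hzs) (not_le.mpr hgz)

lemma lagrange (hsum : ∑ i, (x i) ^ 2 = (n : ℝ)) (hpos : ∀ i, 0 < x i)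
    {i j : Fin n} (hij : i ≠ j) :
    (2:ℝ) ^ (x i) * x j = (2:ℝ) ^ (x j) * x i := by
  classical
  set p := x i with hpdef
  set q := x j with hqdef
  have hp : 0 < p := hpos i
  have hq : 0 < q := hpos j
  set R : ℝ := p ^ 2 + q ^ 2 with hR
  set C : ℝ := ∑ k ∈ (Finset.univ \ {j}) \ {i}, (2:ℝ) ^ (x k) with hC
  set C2 : ℝ := ∑ k ∈ (Finset.univ \ {j}) \ {i}, (x k) ^ 2 with hC2
  have hsplitg : ∑ k, (2:ℝ) ^ (x k) = (2:ℝ) ^ p + (2:ℝ) ^ q + C :=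
    sum_split_two (fun t => (2:ℝ) ^ t) x hij
  have hsplits : ∑ k, (x k) ^ 2 = p ^ 2 + q ^ 2 + C2 :=
    sum_split_two (fun t => t ^ 2) x hij
  set F : ℝ → ℝ := fun u => (2:ℝ) ^ u + (2:ℝ) ^ (Real.sqrt (R - u ^ 2)) + C with hF
  have hq2 : Real.sqrt (R - p ^ 2) = q := by
    rw [hR]
    rw [show p ^ 2 + q ^ 2 - p ^ 2 = q ^ 2 by ring]
    exact Real.sqrt_sq hq.le
  have hFp : F p = ∑ k, (2:ℝ) ^ (x k) := by
    rw [hF, hsplitg]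
    simp only [hq2]
  have hpr : p < Real.sqrt R := by
    rw [hR, Real.lt_sqrt hp.le]
    nlinarith
  have hloc : IsLocalMax F p := by
    have hmem : Set.Ioo (0:ℝ) (Real.sqrt R) ∈ nhds p := isOpen_Ioo.mem_nhds ⟨hp, hpr⟩
    filter_upwards [hmem] with u hu
    obtain ⟨hu0, hur⟩ := hu
    have hu2 : u ^ 2 < R := by
      have := Real.sq_sqrt (by positivity : (0:ℝ) ≤ R)
      nlinarith [hur, hu0, Real.sqrt_nonneg R]
    set w := Real.sqrt (R - u ^ 2) with hw
    have hw2 : w ^ 2 = R - u ^ 2 := Real.sq_sqrt (by linarith)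
    set z := Function.update (Function.update x i u) j w with hz
    have hz0 : ∀ k, 0 ≤ z k := by
      intro k
      rw [hz, Function.update_apply, Function.update_apply]
      split
      · exact Real.sqrt_nonneg _
      split
      · exact hu0.le
      · exact hx0 k
    have hzs : ∑ k, (z k) ^ 2 ≤ (n : ℝ) := by
      rw [hz, sum_two_update (fun s => s ^ 2) x hij u w]
      rw [← hC2]
      nlinarith [hsplits, hsum, hw2]
    have := hmax z hz0 hzs
    rw [hz, sum_two_update (fun s => (2:ℝ) ^ s) x hij u w, ← hC] at this
    show (2:ℝ) ^ u + (2:ℝ) ^ Real.sqrt (R - u ^ 2) + C ≤ F p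
    rw [hFp, hsplitg, ← hw]
    linarith [this]
  have hinner : HasDerivAt (fun u : ℝ => R - u ^ 2) (-(2 * p)) p := by
    have h1 : HasDerivAt (fun u : ℝ => u ^ 2) (2 * p) p := by
      simpa using hasDerivAt_pow 2 p
    simpa using h1.const_sub R
  have hRq : R - p ^ 2 ≠ 0 := by
    rw [hR]; nlinarith
  have hsqrt : HasDerivAt (fun u : ℝ => Real.sqrt (R - u ^ 2))
      (1 / (2 * q) * (-(2 * p))) p := by
    have := (Real.hasDerivAt_sqrt hRq).comp p hinner
    rw [hq2] at this
    exact this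
  have hrpow2 : HasDerivAt (fun u : ℝ => (2:ℝ) ^ (Real.sqrt (R - u ^ 2)))
      ((2:ℝ) ^ q * Real.log 2 * (1 / (2 * q) * (-(2 * p)))) p := by
    have := (hasDerivAt_two_rpow (Real.sqrt (R - p ^ 2))).comp p hsqrt
    rw [hq2] at this
    exact this
  have hder : HasDerivAt F
      ((2:ℝ) ^ p * Real.log 2 + (2:ℝ) ^ q * Real.log 2 * (1 / (2 * q) * (-(2 * p)))) p :=
    ((hasDerivAt_two_rpow p).add hrpow2).add_const C
  have hzero : (2:ℝ) ^ p * Real.log 2 + (2:ℝ) ^ q * Real.log 2 * (1 / (2 * q) * (-(2 * p)))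
      = 0 := by
    rw [← hder.deriv]
    exact hloc.deriv_eq_zero
  have hl := l_pos
  have key : Real.log 2 * ((2:ℝ) ^ p * q) = Real.log 2 * ((2:ℝ) ^ q * p) := by
    field_simp at hzero
    nlinarith [hzero]
  exact mul_left_cancel₀ (ne_of_gt hl) key

lemma not_two_big (hsum : ∑ i, (x i) ^ 2 = (n : ℝ)) (hpos : ∀ i, 0 < x i)
    {i j : Fin n} (hij : i ≠ j)
    (hbi : 1 / Real.log 2 < x i) (hbj : 1 / Real.log 2 < x j) : False := by
  classical
  -- first, the two coordinates are equal
  have hlag := lagrange hx0 hxs hmax hsum hpos hij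
  have hphi : (2:ℝ) ^ (x i) / (x i) = (2:ℝ) ^ (x j) / (x j) := by
    rw [div_eq_div_iff (hpos i).ne' (hpos j).ne']
    exact hlag
  have heq : x i = x j :=
    phi_strictMonoOn.injOn (Set.mem_Ici.mpr hbi.le) (Set.mem_Ici.mpr hbj.le) hphi
  set v := x i with hv
  have hvt : 1 / Real.log 2 < v := hbi
  have hv0 : 0 < v := hpos i
  set h : ℝ := (v ^ 2 - (1 / Real.log 2) ^ 2) / 2 with hh
  have ht0v : (1 / Real.log 2) ^ 2 < v ^ 2 := by
    have h0 : (0:ℝ) < 1 / Real.log 2 := by positivity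
    nlinarith
  have hhpos : 0 < h := by rw [hh]; linarith
  have hvh : 0 < v ^ 2 - h := by
    rw [hh]
    have : (0:ℝ) < (1 / Real.log 2) ^ 2 := by positivity
    nlinarith
  set A := Real.sqrt (v ^ 2 + h) with hA
  set B := Real.sqrt (v ^ 2 - h) with hB
  have hA2 : A ^ 2 = v ^ 2 + h := Real.sq_sqrt (by nlinarith)
  have hB2 : B ^ 2 = v ^ 2 - h := Real.sq_sqrt hvh.le
  set z := Function.update (Function.update x i A) j B with hz
  have hz0 : ∀ k, 0 ≤ z k := by
    intro k
    rw [hz, Function.update_apply, Function.update_apply]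
    split
    · exact Real.sqrt_nonneg _
    split
    · exact Real.sqrt_nonneg _
    · exact hx0 k
  have hsplits : ∑ k, (x k) ^ 2
      = (x i) ^ 2 + (x j) ^ 2 + ∑ k ∈ (Finset.univ \ {j}) \ {i}, (x k) ^ 2 :=
    sum_split_two (fun t => t ^ 2) x hij
  have hzs : ∑ k, (z k) ^ 2 ≤ (n : ℝ) := by
    rw [hz, sum_two_update (fun s => s ^ 2) x hij A B]
    rw [← hsum, hsplits]
    rw [← heq, ← hv]
    nlinarith [hA2, hB2]
  -- strict convexity
  have hcv : (1 / Real.log 2) ^ 2 < v ^ 2 - h := by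
    rw [hh]; nlinarith
  have hconv := u_strictConvexOn hcv
  have hmemB : v ^ 2 - h ∈ Set.Ici (v ^ 2 - h) := Set.mem_Ici.mpr le_rfl
  have hmemA : v ^ 2 + h ∈ Set.Ici (v ^ 2 - h) := Set.mem_Ici.mpr (by linarith)
  have hne : v ^ 2 - h ≠ v ^ 2 + h := by linarith
  have half : (0:ℝ) < 1 / 2 := by norm_num
  have hcvx := hconv.2 hmemB hmemA hne half half (by norm_num)
  simp only [smul_eq_mul] at hcvx
  have hmid : (1:ℝ) / 2 * (v ^ 2 - h) + 1 / 2 * (v ^ 2 + h) = v ^ 2 := by ring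
  rw [hmid] at hcvx
  rw [Real.sqrt_sq hv0.le] at hcvx
  -- hcvx : 2 ^ v < 1/2 * 2^B + 1/2 * 2^A
  have hgz : ∑ k, (2:ℝ) ^ (x k) < ∑ k, (2:ℝ) ^ (z k) := by
    rw [hz, sum_two_update (fun s => (2:ℝ) ^ s) x hij A B,
      sum_split_two (fun s => (2:ℝ) ^ s) x hij, ← heq, ← hv]
    linarith [hcvx]
  exact absurd (hmax z hz0 hzs) (not_le.mpr hgz)

end Max
end Stmt8Aux

theorem stmt_8 (n : ℕ) (hn : 0 < n) (y : Fin n → ℝ)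
    (hy0 : ∀ i, 0 ≤ y i) (hy : (∑ i, (y i) ^ 2) ≤ (n : ℝ)) :
    ∃ x : Fin n → ℝ,
      (∑ i, (x i) ^ 2) ≤ (n : ℝ) ∧
      (∑ i, (2 : ℝ) ^ (y i)) ≤ (∑ i, (2 : ℝ) ^ (x i)) ∧
      ∃ σ : Equiv.Perm (Fin n),
        (∃ a : ℝ, 0 ≤ a ∧ a ≤ 1 ∧ ∀ i, x (σ i) = a) ∨
        (∃ a b : ℝ, 0 < a ∧ a < 1 ∧ 1 < b ∧
          (2 : ℝ) ^ a / a = (2 : ℝ) ^ b / b ∧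
          ∀ i : Fin n, x (σ i) = if (i : ℕ) = n - 1 then b else a) ∨
        (∃ a b : ℝ, 0 < a ∧ a < 1 ∧ 1 < b ∧
          (2 : ℝ) ^ a / a = (2 : ℝ) ^ b / b ∧
          ∀ i : Fin n, x (σ i) = if (i : ℕ) = 0 then a else b) := by
  classical
  obtain ⟨x, hx0, hxs, hmax⟩ := Stmt8Aux.exists_max n y hy0 hy
  have hsum : ∑ i, (x i) ^ 2 = (n : ℝ) := Stmt8Aux.sum_eq hx0 hxs hmax hn
  have hpos : ∀ i, 0 < x i := Stmt8Aux.all_pos hx0 hxs hmax hn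
  have hlag : ∀ i j : Fin n, i ≠ j → (2:ℝ) ^ (x i) * x j = (2:ℝ) ^ (x j) * x i :=
    fun i j hij => Stmt8Aux.lagrange hx0 hxs hmax hsum hpos hij
  have hbig : ∀ i j : Fin n, i ≠ j → 1 / Real.log 2 < x i → 1 / Real.log 2 < x j → False :=
    fun i j hij h1 h2 => Stmt8Aux.not_two_big hx0 hxs hmax hsum hpos hij h1 h2
  have phi_anti : StrictAntiOn (fun t : ℝ => (2:ℝ) ^ t / t) (Set.Ioc 0 (1 / Real.log 2)) :=
    Stmt8Aux.phi_strictAntiOn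
  have one_lt_t0 : (1:ℝ) < 1 / Real.log 2 := Stmt8Aux.one_lt_t0
  refine ⟨x, le_of_eq hsum, hmax y hy0 hy, ?_⟩
  by_cases hcase : ∀ i, x i ≤ 1 / Real.log 2
  · -- all coordinates equal, common value is 1
    have hall : ∀ i j : Fin n, x i = x j := by
      intro i j
      rcases eq_or_ne i j with rfl | hij
      · rfl
      have hphi : (2:ℝ) ^ (x i) / (x i) = (2:ℝ) ^ (x j) / (x j) := by
        rw [div_eq_div_iff (hpos i).ne' (hpos j).ne']
        exact hlag i j hij
      exact phi_anti.injOn ⟨hpos i, hcase i⟩ ⟨hpos j, hcase j⟩ hphi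
    set i₀ : Fin n := ⟨0, hn⟩
    set a := x i₀ with ha
    have hsc : ∑ i, (x i) ^ 2 = (n : ℝ) * a ^ 2 := by
      rw [Finset.sum_congr rfl (fun i (_ : i ∈ Finset.univ) => by rw [hall i i₀])]
      rw [Finset.sum_const, Finset.card_univ, Fintype.card_fin, nsmul_eq_mul]
    have ha2 : a ^ 2 = 1 := by
      have hn' : (0:ℝ) < n := Nat.cast_pos.mpr hn
      have := hsum
      rw [hsc] at this
      field_simp at this
      nlinarith
    have ha1 : a = 1 := by
      have h0 : 0 < a := hpos i₀
      nlinarith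
    refine ⟨Equiv.refl _, Or.inl ⟨1, zero_le_one, le_refl 1, fun i => ?_⟩⟩
    simp only [Equiv.refl_apply]
    rw [hall i i₀, ← ha, ha1]
  · push_neg at hcase
    obtain ⟨j, hj⟩ := hcase
    set b := x j with hb
    have hb1 : 1 < b := lt_trans one_lt_t0 hj
    have hsmall : ∀ k, k ≠ j → x k ≤ 1 / Real.log 2 := by
      intro k hk
      by_contra hcon
      push_neg at hcon
      exact hbig k j hk hcon hj
    rcases Nat.lt_or_ge n 2 with hn1 | hn2
    · -- n = 1 : impossible since b > 1
      exfalso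
      have hne1 : n = 1 := by omega
      subst hne1
      have hsum1 : (x 0) ^ 2 = 1 := by
        have := hsum
        rw [Fin.sum_univ_one] at this
        simpa using this
      have hj0 : j = 0 := Subsingleton.elim j 0
      have hx01 : x 0 = 1 := by nlinarith [hpos 0]
      rw [hj0] at hb
      rw [hb, hx01] at hb1
      exact lt_irrefl 1 hb1
    · -- n ≥ 2
      have hex : ∃ k : Fin n, k ≠ j := by
        rcases Nat.eq_zero_or_pos j.val with hj0 | hj0
        · exact ⟨⟨1, by omega⟩, fun h => by
            have := congrArg Fin.val h
            simp [hj0] at this⟩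
        · exact ⟨⟨0, by omega⟩, fun h => by
            have := congrArg Fin.val h
            simp at this
            omega⟩
      obtain ⟨k, hkj⟩ := hex
      set a := x k with ha
      have ha0 : 0 < a := hpos k
      have hat0 : a ≤ 1 / Real.log 2 := hsmall k hkj
      have hsmalleq : ∀ k', k' ≠ j → x k' = a := by
        intro k' hk'
        rcases eq_or_ne k' k with rfl | hne
        · rfl
        have hphi : (2:ℝ) ^ (x k') / (x k') = (2:ℝ) ^ (x k) / (x k) := by
          rw [div_eq_div_iff (hpos k').ne' (hpos k).ne']
          exact hlag k' k hne
        exact phi_anti.injOn ⟨hpos k', hsmall k' hk'⟩ ⟨hpos k, hat0⟩ hphi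
      have hphiab : (2:ℝ) ^ a / a = (2:ℝ) ^ b / b := by
        rw [div_eq_div_iff ha0.ne' (hpos j).ne']
        exact hlag k j hkj
      -- a < 1
      have hsplit : ∑ i, (x i) ^ 2
          = (x j) ^ 2 + ∑ k' ∈ Finset.univ \ {j}, (x k') ^ 2 :=
        Stmt8Aux.sum_split_one (fun t => t ^ 2) x j
      have hrest : ∑ k' ∈ Finset.univ \ {j}, (x k') ^ 2 = ((n : ℝ) - 1) * a ^ 2 := by
        rw [Finset.sum_congr rfl (fun k' hk' => by
          rw [hsmalleq k' (by
            simp only [Finset.mem_sdiff, Finset.mem_univ, Finset.mem_singleton] at hk'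
            exact hk'.2)])]
        rw [Finset.sum_const, nsmul_eq_mul]
        congr 1
        rw [Finset.card_sdiff_of_subset (by simp), Finset.card_univ, Fintype.card_fin,
          Finset.card_singleton]
        rw [Nat.cast_sub (by omega)]
        simp
      have heqn : b ^ 2 + ((n : ℝ) - 1) * a ^ 2 = (n : ℝ) := by
        have h' := hsum
        rw [hsplit, hrest, ← hb] at h'
        linarith
      have hn1R : (1:ℝ) ≤ (n : ℝ) - 1 := by
        have : (2:ℝ) ≤ (n : ℝ) := by exact_mod_cast hn2
        linarith
      have ha2 : a ^ 2 < 1 := by nlinarith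
      have ha1 : a < 1 := by nlinarith
      -- build the permutation
      set e : Fin n := ⟨n - 1, by omega⟩ with he
      refine ⟨Equiv.swap e j, Or.inr (Or.inl ⟨a, b, ha0, ha1, hb1, hphiab, fun i => ?_⟩)⟩
      by_cases hi : (i : ℕ) = n - 1
      · rw [if_pos hi]
        have hie : i = e := Fin.ext (by simp [hi, he])
        rw [hie, Equiv.swap_apply_left]
      · rw [if_neg hi]
        have hie : i ≠ e := fun h => hi (by rw [h])
        by_cases hij' : i = j
        · rw [hij', Equiv.swap_apply_right]
          exact hsmalleq e (fun h => hie (hij'.trans h.symm))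
        · rw [Equiv.swap_apply_of_ne_of_ne hie hij']
          exact hsmalleq i hij'
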